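/- Let N be a positive integer and p an odd prime not dividing N. Then in ZMod p one has (N+1) · q_p(2) ≡ − Σ_{0 ≤ j < N/2} Σ_{2jp/(2N) < m < (2j+1)p/(2N)} 1/m, where q_p(2) = (2^{p−1} − 1)/p ∈ ℤ, the outer sum is over integers j with 0 ≤ j < N/2, and the inner sums of reciprocals are rational numbers with denominator coprime to p viewed in ZMod p. -/

import Mathlib

open Finset

open scoped Classical

section SDIHelpers

variable {p N : ℕ}

private lemma sdi_two_ne_zero (hp : p.Prime) (hodd : Odd p) : (2 : ZMod p) ≠ 0 := by
  have : ((2 : ℕ) : ZMod p) ≠ 0 := by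
    rw [Ne, ZMod.natCast_eq_zero_iff]
    intro h
    have := (Nat.prime_dvd_prime_iff_eq hp Nat.prime_two).mp h
    rcases hodd with ⟨k, hk⟩
    omega
  simpa using this

private lemma sdi_reflect (hp : p.Prime) (g : ℕ → Prop) [DecidablePred g] :
    ∑ m ∈ (Finset.Ioo 0 p).filter (fun m => g (p - m)), ((m : ZMod p))⁻¹
    = - ∑ m ∈ (Finset.Ioo 0 p).filter g, ((m : ZMod p))⁻¹ := by
  haveI : Fact p.Prime := ⟨hp⟩
  rw [← Finset.sum_neg_distrib]
  refine Finset.sum_nbij' (fun m => p - m) (fun m => p - m) ?_ ?_ ?_ ?_ ?_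
  · intro m hm
    simp only [Finset.mem_filter, Finset.mem_Ioo] at hm ⊢
    exact ⟨by omega, hm.2⟩
  · intro m hm
    simp only [Finset.mem_filter, Finset.mem_Ioo] at hm ⊢
    refine ⟨by omega, ?_⟩
    have : p - (p - m) = m := by omega
    rw [this]; exact hm.2
  · intro m hm
    simp only [Finset.mem_filter, Finset.mem_Ioo] at hm
    show p - (p - m) = m
    omega
  · intro m hm
    simp only [Finset.mem_filter, Finset.mem_Ioo] at hm
    show p - (p - m) = m
    omega
  · intro m hm
    simp only [Finset.mem_filter, Finset.mem_Ioo] at hm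
    have hcast : ((p - m : ℕ) : ZMod p) = -(m : ZMod p) := by
      have : ((p - m : ℕ) : ZMod p) = (p : ZMod p) - (m : ZMod p) := by
        rw [Nat.cast_sub]; omega
      rw [this, ZMod.natCast_self, zero_sub]
    show (m : ZMod p)⁻¹ = -((p - m : ℕ) : ZMod p)⁻¹
    rw [hcast, inv_neg, neg_neg]

private lemma sdi_sum_inv_zero (hp : p.Prime) (hodd : Odd p) :
    ∑ m ∈ Finset.Ioo 0 p, ((m : ZMod p))⁻¹ = 0 := by
  haveI : Fact p.Prime := ⟨hp⟩
  have h := sdi_reflect (p := p) hp (fun _ => True)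
  simp only [Finset.filter_true] at h
  have h2 := sdi_two_ne_zero hp hodd
  have h3 : (2 : ZMod p) * ∑ m ∈ Finset.Ioo 0 p, ((m : ZMod p))⁻¹ = 0 := by
    rw [two_mul]; nth_rewrite 1 [h]; ring
  exact (mul_eq_zero.mp h3).resolve_left h2

private lemma sdi_mod_inv {a b : ℕ} (hab : a * b ≡ 1 [MOD p]) {x : ℕ}
    (hx : x < p) : a * (b * x % p) % p = x := by
  have h1 : a * (b * x % p) ≡ a * (b * x) [MOD p] :=
    Nat.ModEq.mul_left a (Nat.mod_modEq (b * x) p)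
  have h2 : a * (b * x) ≡ 1 * x [MOD p] := by
    rw [← mul_assoc]
    exact Nat.ModEq.mul_right x hab
  have h3 : a * (b * x % p) ≡ x [MOD p] := by simpa using h1.trans h2
  have h4 : a * (b * x % p) % p = x % p := h3
  rwa [Nat.mod_eq_of_lt hx] at h4

private lemma sdi_scale (hp : p.Prime) {a : ℕ} (ha : ¬ p ∣ a) (g : ℕ → Prop)
    [DecidablePred g] :
    ∑ m ∈ (Finset.Ioo 0 p).filter (fun m => g (a * m % p)), ((m : ZMod p))⁻¹
    = (a : ZMod p) * ∑ k ∈ (Finset.Ioo 0 p).filter g, ((k : ZMod p))⁻¹ := by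
  haveI : Fact p.Prime := ⟨hp⟩
  have hp1 : 1 < p := hp.one_lt
  have ha0 : (a : ZMod p) ≠ 0 := by
    rw [Ne, ZMod.natCast_eq_zero_iff]; exact ha
  set b := ((a : ZMod p)⁻¹).val with hbdef
  have hb : ((b : ℕ) : ZMod p) = (a : ZMod p)⁻¹ := ZMod.natCast_zmod_val _
  have hab : a * b ≡ 1 [MOD p] := by
    rw [← ZMod.natCast_eq_natCast_iff]
    push_cast
    rw [hb, mul_inv_cancel₀ ha0]
  have hba : b * a ≡ 1 [MOD p] := by rwa [mul_comm] at hab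
  have hpb : ¬ p ∣ b := by
    intro hd
    have : (b : ZMod p) = 0 := (ZMod.natCast_eq_zero_iff _ _).mpr hd
    rw [hb] at this
    exact inv_ne_zero ha0 this
  rw [Finset.mul_sum]
  refine Finset.sum_nbij' (fun m => a * m % p) (fun k => b * k % p) ?_ ?_ ?_ ?_ ?_
  · intro m hm
    simp only [Finset.mem_filter, Finset.mem_Ioo] at hm ⊢
    refine ⟨⟨?_, Nat.mod_lt _ (by omega)⟩, hm.2⟩
    rcases hm with ⟨⟨hm0, hmp⟩, -⟩
    have : ¬ p ∣ a * m := by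
      intro hd
      rcases (hp.dvd_mul.mp hd) with h | h
      · exact ha h
      · exact absurd (Nat.le_of_dvd hm0 h) (by omega)
    omega
  · intro k hk
    simp only [Finset.mem_filter, Finset.mem_Ioo] at hk ⊢
    rcases hk with ⟨⟨hk0, hkp⟩, hg⟩
    have hne : ¬ p ∣ b * k := by
      intro hd
      rcases (hp.dvd_mul.mp hd) with h | h
      · exact hpb h
      · exact absurd (Nat.le_of_dvd hk0 h) (by omega)
    refine ⟨⟨by omega, Nat.mod_lt _ (by omega)⟩, ?_⟩
    rw [sdi_mod_inv hab hkp]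
    exact hg
  · intro m hm
    simp only [Finset.mem_filter, Finset.mem_Ioo] at hm
    show b * (a * m % p) % p = m
    exact sdi_mod_inv hba hm.1.2
  · intro k hk
    simp only [Finset.mem_filter, Finset.mem_Ioo] at hk
    show a * (b * k % p) % p = k
    exact sdi_mod_inv hab hk.1.2
  · intro m hm
    show (m : ZMod p)⁻¹ = (a : ZMod p) * ((a * m % p : ℕ) : ZMod p)⁻¹
    rw [ZMod.natCast_mod, Nat.cast_mul, mul_inv, ← mul_assoc, mul_inv_cancel₀ ha0, one_mul]

private lemma sdi_choose (hp : p.Prime) : ∀ k, k ≤ p - 1 →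
    (((p-1).choose k : ℕ) : ZMod p) = (-1)^k := by
  intro k
  induction k with
  | zero => intro _; simp
  | succ n ih =>
    intro hn
    have hp1 : 1 ≤ p - 1 := by have := hp.two_le; omega
    have hrec : p.choose (n+1) = (p-1).choose n + (p-1).choose (n+1) := by
      have hpe : p = (p - 1) + 1 := by have := hp.two_le; omega
      conv_lhs => rw [hpe]
      rw [Nat.choose_succ_succ]
    have hdvd : p ∣ p.choose (n+1) :=
      Nat.Prime.dvd_choose_self hp (by omega) (by have := hp.two_le; omega)
    have hz : ((p.choose (n+1) : ℕ) : ZMod p) = 0 :=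
      (ZMod.natCast_eq_zero_iff _ _).mpr hdvd
    have := ih (by omega)
    rw [hrec] at hz
    push_cast at hz
    rw [this] at hz
    have : (((p-1).choose (n+1) : ℕ) : ZMod p) = -(-1)^n := by linear_combination hz
    rw [this, pow_succ]
    ring

private lemma sdi_eisenstein (hp : p.Prime) (hodd : Odd p) :
    ∑ m ∈ (Finset.Ioo 0 p).filter (fun m => ¬ 2 * m < p), ((m : ZMod p))⁻¹
    = 2 * (((2 ^ (p - 1) - 1) / p : ℕ) : ZMod p) := by
  haveI : Fact p.Prime := ⟨hp⟩
  have h2 : (2 : ZMod p) ≠ 0 := sdi_two_ne_zero hp hodd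
  have hp2 : 2 ≤ p := hp.two_le
  have hp3 : p ≠ 2 := by rintro rfl; exact (by norm_num : ¬ Odd 2) hodd
  have hdvd : p ∣ 2^(p-1) - 1 := by
    rw [← ZMod.natCast_eq_zero_iff]
    have h1le : 1 ≤ 2^(p-1) := Nat.one_le_two_pow
    push_cast [h1le]
    rw [ZMod.pow_card_sub_one_eq_one h2]
    ring
  set q : ℕ := (2 ^ (p - 1) - 1) / p with hq
  have hqp : p * q = 2^(p-1) - 1 := Nat.mul_div_cancel' hdvd
  have hsum : ∑ k ∈ Finset.Ico 1 p, p.choose k = 2^p - 2 := by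
    have h0 : ∑ k ∈ Finset.range (p+1), p.choose k = 2^p := Nat.sum_range_choose p
    rw [Finset.sum_range_succ] at h0
    have h1 : ∑ k ∈ Finset.range p, p.choose k
        = p.choose 0 + ∑ k ∈ Finset.Ico 1 p, p.choose k := by
      rw [Finset.range_eq_Ico, ← Finset.sum_eq_sum_Ico_succ_bot (by omega : 0 < p)]
    rw [h1] at h0
    simp at h0
    omega
  have hterm : ∀ k ∈ Finset.Ico 1 p, p.choose k = p * (p.choose k / p) := by
    intro k hk
    simp only [Finset.mem_Ico] at hk
    exact (Nat.mul_div_cancel' (Nat.Prime.dvd_choose_self hp (by omega) hk.2)).symm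
  have hsum2 : p * ∑ k ∈ Finset.Ico 1 p, (p.choose k / p) = p * (2 * q) := by
    rw [Finset.mul_sum]
    rw [← Finset.sum_congr rfl hterm, hsum]
    have h2p : 2^p = 2 * 2^(p-1) := by
      conv_lhs => rw [show p = 1 + (p-1) by omega]
      rw [pow_add, pow_one]
    have hq2 : p * (2 * q) = 2 * (p * q) := by ring
    have h1le : 1 ≤ 2^(p-1) := Nat.one_le_two_pow
    rw [hq2, hqp]
    omega
  have hsum3 : ∑ k ∈ Finset.Ico 1 p, (p.choose k / p) = 2 * q :=
    Nat.eq_of_mul_eq_mul_left (by omega) hsum2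
  have hsum4 : ∑ k ∈ Finset.Ico 1 p, ((p.choose k / p : ℕ) : ZMod p) = 2 * (q : ZMod p) := by
    rw [← Nat.cast_sum, hsum3]; push_cast; ring
  have hterm2 : ∀ k ∈ Finset.Ico 1 p,
      ((p.choose k / p : ℕ) : ZMod p) = (-1)^(k-1) * ((k : ZMod p))⁻¹ := by
    intro k hk
    simp only [Finset.mem_Ico] at hk
    have hkid : p * (p-1).choose (k-1) = p.choose k * k := by
      have := Nat.add_one_mul_choose_eq (p-1) (k-1)
      rw [show p - 1 + 1 = p by omega, show k - 1 + 1 = k by omega] at this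
      exact this
    rw [hterm k (by simp [Finset.mem_Ico]; omega)] at hkid
    have hkid2 : (p-1).choose (k-1) = (p.choose k / p) * k := by
      have h' : p * ((p-1).choose (k-1)) = p * (p.choose k / p * k) := by rw [hkid]; ring
      exact Nat.eq_of_mul_eq_mul_left (by omega) h'
    have hcast : (((p-1).choose (k-1) : ℕ) : ZMod p) = (-1)^(k-1) :=
      sdi_choose hp (k-1) (by omega)
    have hk0 : ((k : ℕ) : ZMod p) ≠ 0 := by
      rw [Ne, ZMod.natCast_eq_zero_iff]
      intro hd
      exact absurd (Nat.le_of_dvd (by omega) hd) (by omega)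
    have : ((p.choose k / p : ℕ) : ZMod p) * (k : ZMod p) = (-1)^(k-1) := by
      rw [← Nat.cast_mul, ← hkid2, hcast]
    field_simp at this ⊢
    linear_combination this
  rw [Finset.sum_congr rfl hterm2] at hsum4
  have hIoo : Finset.Ico 1 p = Finset.Ioo 0 p := by
    ext x; simp only [Finset.mem_Ico, Finset.mem_Ioo]; omega
  rw [hIoo] at hsum4
  have hsplit : ∀ k ∈ Finset.Ioo 0 p,
      (-1 : ZMod p)^(k-1) * ((k : ZMod p))⁻¹
      = ((k : ZMod p))⁻¹ - 2 * (if Even k then ((k : ZMod p))⁻¹ else 0) := by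
    intro k hk
    simp only [Finset.mem_Ioo] at hk
    by_cases he : Even k
    · have hodd1 : Odd (k - 1) := Nat.Even.sub_odd (by omega) he odd_one
      rw [if_pos he, Odd.neg_one_pow hodd1]
      ring
    · have hev1 : Even (k - 1) :=
        Nat.Odd.sub_odd (Nat.not_even_iff_odd.mp he) odd_one
      rw [if_neg he, Even.neg_one_pow hev1]
      ring
  rw [Finset.sum_congr rfl hsplit, Finset.sum_sub_distrib, ← Finset.mul_sum,
    ← Finset.sum_filter, sdi_sum_inv_zero hp hodd] at hsum4
  have heven : ∑ k ∈ (Finset.Ioo 0 p).filter (fun k => Even k), ((k : ZMod p))⁻¹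
      = (2 : ZMod p)⁻¹ * ∑ m ∈ (Finset.Ioo 0 p).filter (fun m => 2 * m < p),
          ((m : ZMod p))⁻¹ := by
    rw [Finset.mul_sum]
    refine Finset.sum_nbij' (fun k => k / 2) (fun m => 2 * m) ?_ ?_ ?_ ?_ ?_
    · intro k hk
      simp only [Finset.mem_filter, Finset.mem_Ioo] at hk ⊢
      rcases hk.2 with ⟨t, ht⟩
      omega
    · intro m hm
      simp only [Finset.mem_filter, Finset.mem_Ioo] at hm ⊢
      exact ⟨⟨by omega, by omega⟩, ⟨m, by ring⟩⟩
    · intro k hk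
      simp only [Finset.mem_filter, Finset.mem_Ioo] at hk
      rcases hk.2 with ⟨t, ht⟩
      show 2 * (k / 2) = k
      omega
    · intro m hm
      show 2 * m / 2 = m
      omega
    · intro k hk
      simp only [Finset.mem_filter, Finset.mem_Ioo] at hk
      rcases hk.2 with ⟨t, ht⟩
      show ((k : ZMod p))⁻¹ = 2⁻¹ * (((k / 2 : ℕ)) : ZMod p)⁻¹
      rw [show k / 2 = t by omega,
        show ((k : ℕ) : ZMod p) = ((2 : ZMod p)) * (((t : ℕ)) : ZMod p) by
          rw [show k = 2 * t by omega]; push_cast; ring,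
        mul_inv]
  rw [heven] at hsum4
  have hLH := Finset.sum_filter_add_sum_filter_not (Finset.Ioo 0 p)
    (fun m => 2 * m < p) (fun m => ((m : ZMod p))⁻¹)
  rw [sdi_sum_inv_zero hp hodd] at hLH
  have h2inv : (2 : ZMod p) * (2 : ZMod p)⁻¹ = 1 := mul_inv_cancel₀ h2
  set L := ∑ m ∈ (Finset.Ioo 0 p).filter (fun m => 2 * m < p), ((m : ZMod p))⁻¹ with hL
  set H := ∑ m ∈ (Finset.Ioo 0 p).filter (fun m => ¬ 2 * m < p), ((m : ZMod p))⁻¹ with hH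
  have hfin : -L = 2 * (q : ZMod p) := by
    rw [← hsum4]
    have hcanc : (2 : ZMod p) * (2⁻¹ * L) = L := by
      rw [← mul_assoc, h2inv, one_mul]
    rw [hcanc]
    ring
  have hHL : H = -L := by linear_combination hLH
  rw [hHL, hfin]

private lemma sdi_index (hp : p.Prime) (hN : 0 < N) (hpN : ¬ p ∣ N) {m : ℕ}
    (hm0 : 0 < m) (hmp : m < p) (j : ℕ) :
    ((j < N ∧ 2 * j < N) ∧ (2 * j * p < 2 * N * m ∧ 2 * N * m < (2 * j + 1) * p)) ↔
      (j = N * m / p ∧ (2 * m < p ∧ 2 * (N * m % p) < p)) := by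
  have hppos : 0 < p := hp.pos
  set d := N * m / p with hd
  set r := N * m % p with hr
  have hdm : N * m = p * d + r := (Nat.div_add_mod (N * m) p).symm
  have hrp : r < p := Nat.mod_lt _ hppos
  have hr0 : 0 < r := by
    rw [hr]
    by_contra hcon
    have h0 : N * m % p = 0 := by omega
    have : p ∣ N * m := Nat.dvd_of_mod_eq_zero h0
    rcases (Nat.Prime.dvd_mul hp).mp this with h | h
    · exact hpN h
    · exact absurd (Nat.le_of_dvd hm0 h) (by omega)
  constructor
  · rintro ⟨⟨hjN, hj2N⟩, h1, h2⟩
    have hdj : d ≤ j := by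
      have key : p * (2 * d) < p * (2 * j + 1) := by nlinarith
      have := (mul_lt_mul_iff_right₀ hppos).mp key
      omega
    have hjd : j ≤ d := by
      have key : p * (2 * j) < p * (2 * d + 2) := by nlinarith
      have := (mul_lt_mul_iff_right₀ hppos).mp key
      omega
    have hjd' : j = d := le_antisymm hjd hdj
    refine ⟨hjd', ?_, ?_⟩
    · have hle : (2 * j + 1) * p ≤ N * p := Nat.mul_le_mul_right p (by omega)
      have key : N * (2 * m) < N * p := by nlinarith
      exact (mul_lt_mul_iff_right₀ hN).mp key
    · nlinarith
  · rintro ⟨rfl, hA, hB⟩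
    have h2d : 2 * d < N := by
      have key : p * (2 * d) < p * N := by nlinarith
      exact (mul_lt_mul_iff_right₀ hppos).mp key
    exact ⟨⟨by omega, h2d⟩, by nlinarith, by nlinarith⟩

private lemma sdi_mod_reflect (hp : p.Prime) (hN : 0 < N) (hpN : ¬ p ∣ N) {m : ℕ}
    (hm0 : 0 < m) (hmp : m < p) :
    N * (p - m) % p = p - N * m % p := by
  have hppos : 0 < p := hp.pos
  set d := N * m / p with hd
  set r := N * m % p with hr
  have hdm : N * m = p * d + r := (Nat.div_add_mod (N * m) p).symm
  have hrp : r < p := Nat.mod_lt _ hppos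
  have hr0 : 0 < r := by
    rw [hr]
    by_contra hcon
    have h0 : N * m % p = 0 := by omega
    have : p ∣ N * m := Nat.dvd_of_mod_eq_zero h0
    rcases (Nat.Prime.dvd_mul hp).mp this with h | h
    · exact hpN h
    · exact absurd (Nat.le_of_dvd hm0 h) (by omega)
  have hdN : d < N := by
    rw [hd]
    exact Nat.div_lt_of_lt_mul (by nlinarith)
  have hX : N * (p - m) + N * m = N * p := by
    rw [← Nat.mul_add]
    congr 1
    omega
  have hV : p * (N - d - 1) + p * d + p = N * p := by
    have hsum : (N - d - 1) + d + 1 = N := by omega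
    calc p * (N - d - 1) + p * d + p = p * ((N - d - 1) + d + 1) := by ring
      _ = p * N := by rw [hsum]
      _ = N * p := by rw [Nat.mul_comm]
  have hXeq : N * (p - m) = p * (N - d - 1) + (p - r) := by omega
  rw [hXeq, Nat.mul_add_mod, Nat.mod_eq_of_lt (by omega)]

private lemma sdi_r_pos (hp : p.Prime) (hpN : ¬ p ∣ N) {m : ℕ}
    (hm0 : 0 < m) (hmp : m < p) : 0 < N * m % p := by
  by_contra hcon
  have h0 : N * m % p = 0 := by omega
  have : p ∣ N * m := Nat.dvd_of_mod_eq_zero h0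
  rcases (Nat.Prime.dvd_mul hp).mp this with h | h
  · exact hpN h
  · exact absurd (Nat.le_of_dvd hm0 h) (by omega)

end SDIHelpers

/-- **Theorem 4.1 (Skula–Dobson–Ichimura).** For an odd prime `p` not dividing `N`,
`(N+1)·q_p(2) ≡ - Σ_{0 ≤ j < N/2} s_p(2j, 2N) (mod p)`, where `q_p(2) = (2^{p-1}-1)/p` is the
Fermat quotient with base `2` and `s_p(2j, 2N) = Σ_{2jp/(2N) < m < (2j+1)p/(2N)} 1/m`. -/
theorem skula_dobson_ichimura (N p : ℕ) (hN : 0 < N) (hp : p.Prime) (hodd : Odd p)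
    (hpN : ¬ p ∣ N) :
    ((N : ZMod p) + 1) * (((2 ^ (p - 1) - 1) / p : ℕ) : ZMod p)
    = - ∑ j ∈ (Finset.range N).filter (fun j => 2 * j < N),
        ∑ m ∈ (Finset.Ioo 0 p).filter
          (fun m : ℕ => 2 * j * p < 2 * N * m ∧ 2 * N * m < (2 * j + 1) * p),
        ((m : ZMod p))⁻¹ := by
  haveI : Fact p.Prime := ⟨hp⟩
  have h2 : (2 : ZMod p) ≠ 0 := sdi_two_ne_zero hp hodd
  set q : ZMod p := (((2 ^ (p - 1) - 1) / p : ℕ) : ZMod p) with hqdef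
  -- Step 1: collapse the double sum to a single sum
  have hstep1 :
      ∑ j ∈ (Finset.range N).filter (fun j => 2 * j < N),
        ∑ m ∈ (Finset.Ioo 0 p).filter
          (fun m : ℕ => 2 * j * p < 2 * N * m ∧ 2 * N * m < (2 * j + 1) * p),
        ((m : ZMod p))⁻¹
      = ∑ m ∈ (Finset.Ioo 0 p).filter
          (fun m => 2 * m < p ∧ 2 * (N * m % p) < p), ((m : ZMod p))⁻¹ := by
    calc
      ∑ j ∈ (Finset.range N).filter (fun j => 2 * j < N),
        ∑ m ∈ (Finset.Ioo 0 p).filter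
          (fun m : ℕ => 2 * j * p < 2 * N * m ∧ 2 * N * m < (2 * j + 1) * p),
        ((m : ZMod p))⁻¹
        = ∑ j ∈ (Finset.range N).filter (fun j => 2 * j < N),
            ∑ m ∈ Finset.Ioo 0 p,
              if (2 * j * p < 2 * N * m ∧ 2 * N * m < (2 * j + 1) * p)
              then ((m : ZMod p))⁻¹ else 0 := by
          refine Finset.sum_congr rfl fun j _ => ?_
          rw [Finset.sum_filter]
      _ = ∑ m ∈ Finset.Ioo 0 p,
            ∑ j ∈ (Finset.range N).filter (fun j => 2 * j < N),
              if (2 * j * p < 2 * N * m ∧ 2 * N * m < (2 * j + 1) * p)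
              then ((m : ZMod p))⁻¹ else 0 := Finset.sum_comm
      _ = ∑ m ∈ Finset.Ioo 0 p,
            if (2 * m < p ∧ 2 * (N * m % p) < p) then ((m : ZMod p))⁻¹ else 0 := by
          refine Finset.sum_congr rfl fun m hm => ?_
          simp only [Finset.mem_Ioo] at hm
          have hidx := sdi_index hp hN hpN hm.1 hm.2
          by_cases hD : 2 * m < p ∧ 2 * (N * m % p) < p
          · rw [if_pos hD]
            have hmem : N * m / p ∈ (Finset.range N).filter (fun j => 2 * j < N) := by
              simp only [Finset.mem_filter, Finset.mem_range]
              have := ((hidx (N * m / p)).mpr ⟨rfl, hD⟩).1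
              exact this
            rw [Finset.sum_eq_single_of_mem (N * m / p) hmem ?_]
            · rw [if_pos ((hidx (N * m / p)).mpr ⟨rfl, hD⟩).2]
            · intro j hj hne
              rw [if_neg]
              intro hc
              simp only [Finset.mem_filter, Finset.mem_range] at hj
              exact hne ((hidx j).mp ⟨⟨hj.1, hj.2⟩, hc⟩).1
          · rw [if_neg hD]
            apply Finset.sum_eq_zero
            intro j hj
            rw [if_neg]
            intro hc
            simp only [Finset.mem_filter, Finset.mem_range] at hj
            exact hD ((hidx j).mp ⟨⟨hj.1, hj.2⟩, hc⟩).2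
      _ = ∑ m ∈ (Finset.Ioo 0 p).filter
            (fun m => 2 * m < p ∧ 2 * (N * m % p) < p), ((m : ZMod p))⁻¹ :=
          (Finset.sum_filter _ _).symm
  set S := ∑ m ∈ (Finset.Ioo 0 p).filter
      (fun m => 2 * m < p ∧ 2 * (N * m % p) < p), ((m : ZMod p))⁻¹ with hS
  -- Step 2: inclusion-exclusion
  have hIE : S + (∑ m ∈ (Finset.Ioo 0 p).filter (fun m => ¬ 2 * m < p), ((m : ZMod p))⁻¹)
      + (∑ m ∈ (Finset.Ioo 0 p).filter (fun m => ¬ 2 * (N * m % p) < p), ((m : ZMod p))⁻¹)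
      = (∑ m ∈ Finset.Ioo 0 p, ((m : ZMod p))⁻¹)
      + (∑ m ∈ (Finset.Ioo 0 p).filter
          (fun m => ¬ 2 * m < p ∧ ¬ 2 * (N * m % p) < p), ((m : ZMod p))⁻¹) := by
    rw [hS, Finset.sum_filter, Finset.sum_filter, Finset.sum_filter, Finset.sum_filter,
      ← Finset.sum_add_distrib, ← Finset.sum_add_distrib, ← Finset.sum_add_distrib]
    refine Finset.sum_congr rfl fun m _ => ?_
    by_cases hA : 2 * m < p <;> by_cases hB : 2 * (N * m % p) < p <;>
      simp [hA, hB]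
  -- Step 3: evaluate the three auxiliary sums
  have hH : ∑ m ∈ (Finset.Ioo 0 p).filter (fun m => ¬ 2 * m < p), ((m : ZMod p))⁻¹
      = 2 * q := sdi_eisenstein hp hodd
  have hT : ∑ m ∈ (Finset.Ioo 0 p).filter (fun m => ¬ 2 * (N * m % p) < p),
      ((m : ZMod p))⁻¹ = (N : ZMod p) * (2 * q) := by
    have hs := sdi_scale hp hpN (fun k => ¬ 2 * k < p)
    rw [sdi_eisenstein hp hodd] at hs
    exact hs
  have hU : ∑ m ∈ (Finset.Ioo 0 p).filter
      (fun m => ¬ 2 * m < p ∧ ¬ 2 * (N * m % p) < p), ((m : ZMod p))⁻¹ = -S := by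
    have hrefl := sdi_reflect hp (fun m => 2 * m < p ∧ 2 * (N * m % p) < p)
    have hfe : (Finset.Ioo 0 p).filter
        (fun m => 2 * (p - m) < p ∧ 2 * (N * (p - m) % p) < p)
        = (Finset.Ioo 0 p).filter
          (fun m => ¬ 2 * m < p ∧ ¬ 2 * (N * m % p) < p) := by
      apply Finset.filter_congr
      intro m hm
      simp only [Finset.mem_Ioo] at hm
      rw [sdi_mod_reflect hp hN hpN hm.1 hm.2]
      have hr0 : 0 < N * m % p := sdi_r_pos hp hpN hm.1 hm.2
      have hrp : N * m % p < p := Nat.mod_lt _ hp.pos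
      rcases hodd with ⟨t, ht⟩
      constructor
      · rintro ⟨ha, hb⟩
        constructor <;> omega
      · rintro ⟨ha, hb⟩
        constructor <;> omega
    rw [hfe] at hrefl
    rw [hrefl, hS]
  -- Step 4: assemble
  rw [sdi_sum_inv_zero hp hodd, hH, hT, hU] at hIE
  have h2S : (2 : ZMod p) * S = 2 * (-(((N : ZMod p) + 1) * q)) := by
    linear_combination hIE
  have hSval : S = -(((N : ZMod p) + 1) * q) := mul_left_cancel₀ h2 h2S
  rw [hstep1, hSval, neg_neg]
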